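/- Fix L > 0, m ∈ ℕ, k ∈ [0, 1/L)^m, α, γ ∈ (ℤ/L)^m, η ∈ ℝ^m, ξ ∈ (ℤ/L)^m and t ∈ ℝ. Set E_α^{(k)} := |α + k|²/2 and E_γ^{(k)} := |γ + k|²/2 (the eigenvalues of the free Schrödinger operator H_m = −(1/(8π²))Δ on e_α^{(k)} and e_γ^{(k)}). Then e^{2πi t E_α^{(k)}} · e^{−2πi t E_γ^{(k)}} · ⟨e_α^{(k)}, T(η,ξ) e_γ^{(k)}⟩ = ⟨e_α^{(k)}, T(η + ξt, ξ) e_γ^{(k)}⟩, where ⟨f,g⟩ := ∫_{[-L/2,L/2)^m} conj(f(x)) g(x) dx. (This is the matrix-element form of the exact Egorov theorem, Lemma 4.1: e^{2πitH_m} Op(c) e^{−2πitH_m} = Op(c ∘ φ_t) for the free flow φ_t(p,q) = (p, q + pt).) -/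

import Mathlib

open MeasureTheory

/-- The Weyl–Heisenberg operator `T(η,ξ)` on functions `f : ℝ^m → ℂ`,
`(T(η,ξ)f)(x) = e^{2πi ξ·(η/2 + x)} f(x + η)` (units with `ℏ = 1/(2π)`). -/
noncomputable def WeylT {m : ℕ} (η ξ : Fin m → ℝ) (f : (Fin m → ℝ) → ℂ) :
    (Fin m → ℝ) → ℂ :=
  fun x => Complex.exp (2 * Real.pi * Complex.I * (∑ i, ξ i * (η i / 2 + x i))) * f (x + η)

/-- The Bloch–Fourier basis vector `e_α^{(k)}(x) = L^{-m/2} e^{2πi (α+k)·x}`. -/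
noncomputable def blochBasis (L : ℝ) {m : ℕ} (α k : Fin m → ℝ) : (Fin m → ℝ) → ℂ :=
  fun x => ((L ^ (-(m : ℝ) / 2) : ℝ) : ℂ) *
    Complex.exp (2 * Real.pi * Complex.I * (∑ i, (α i + k i) * x i))

/-- The `L²` pairing over the fundamental domain `[-L/2, L/2)^m`. -/
noncomputable def boxInner (L : ℝ) {m : ℕ} (f g : (Fin m → ℝ) → ℂ) : ℂ :=
  ∫ x in Set.univ.pi (fun _ : Fin m => Set.Ico (-L / 2) (L / 2)),
    (starRingEnd ℂ) (f x) * g x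

/-- Abbreviation for the unit phase `e^{2πir}`. -/
noncomputable def ee (r : ℝ) : ℂ := Complex.exp (2 * Real.pi * Complex.I * (r : ℂ))

lemma ee_add (a b : ℝ) : ee (a + b) = ee a * ee b := by
  rw [ee, ee, ee, ← Complex.exp_add]
  congr 1
  push_cast
  ring

lemma ee_conj (a : ℝ) : (starRingEnd ℂ) (ee a) = ee (-a) := by
  rw [ee, ee, ← Complex.exp_conj]
  congr 1
  have h : (2 * Real.pi * Complex.I * (a : ℂ)) = ((2 * Real.pi * a : ℝ) : ℂ) * Complex.I := by
    push_cast; ring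
  rw [h, map_mul, Complex.conj_ofReal, Complex.conj_I]
  push_cast
  ring

lemma ee_sum {m : ℕ} (f : Fin m → ℝ) : ee (∑ i, f i) = ∏ i, ee (f i) := by
  simp only [ee]
  rw [← Complex.exp_sum]
  congr 1
  push_cast
  rw [Finset.mul_sum]

lemma bloch_eq (L : ℝ) {m : ℕ} (α k : Fin m → ℝ) (x : Fin m → ℝ) :
    blochBasis L α k x = ((L ^ (-(m : ℝ) / 2) : ℝ) : ℂ) * ee (∑ i, (α i + k i) * x i) := rfl

lemma weyl_eq {m : ℕ} (η ξ : Fin m → ℝ) (f : (Fin m → ℝ) → ℂ) (x : Fin m → ℝ) :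
    WeylT η ξ f x = ee (∑ i, ξ i * (η i / 2 + x i)) * f (x + η) := rfl

/-- The basic one-dimensional integral. -/
lemma oneDim (L : ℝ) (hL : 0 < L) (n : ℤ) :
    (∫ x in Set.Ico (-L / 2) (L / 2), ee ((n / L) * x)) =
      if n = 0 then (L : ℂ) else 0 := by
  have hL' : (L : ℝ) ≠ 0 := ne_of_gt hL
  by_cases hn : n = 0
  · subst hn
    rw [if_pos rfl]
    simp only [Int.cast_zero, zero_div, zero_mul, ee, Complex.ofReal_zero, mul_zero,
      Complex.exp_zero]
    rw [setIntegral_const, Measure.real, Real.volume_Ico]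
    have h2 : (L / 2 - -L / 2) = L := by ring
    rw [h2, ENNReal.toReal_ofReal hL.le, Complex.real_smul, mul_one]
  · rw [if_neg hn]
    set c : ℂ := 2 * Real.pi * Complex.I * (n / L) with hc
    have hcne : c ≠ 0 := by
      apply mul_ne_zero
      apply mul_ne_zero
      · simp [Real.pi_ne_zero]
      · exact Complex.I_ne_zero
      · rw [div_ne_zero_iff]
        constructor
        · exact_mod_cast hn
        · exact_mod_cast hL'
    have heq : ∀ x : ℝ, ee ((n / L) * x) = Complex.exp (c * x) := by
      intro x
      rw [ee, hc]
      congr 1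
      push_cast
      ring
    simp only [heq]
    rw [Measure.restrict_congr_set Ico_ae_eq_Ioc,
      ← intervalIntegral.integral_of_le (by linarith : -L / 2 ≤ L / 2)]
    rw [integral_exp_mul_complex hcne]
    have hLC : (L : ℂ) ≠ 0 := by exact_mod_cast hL'
    have h1 : c * ((L / 2 : ℝ) : ℂ) = c * ((-L / 2 : ℝ) : ℂ) + n * (2 * Real.pi * Complex.I) := by
      rw [hc]
      push_cast
      field_simp
      ring
    rw [h1, Complex.exp_add, Complex.exp_int_mul_two_pi_mul_I, mul_one, sub_self, zero_div]

/-- Evaluation of the matrix element as an explicit phase times a product of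
one-dimensional integrals. -/
lemma box_eval (L : ℝ) {m : ℕ} (k α γ ξ η : Fin m → ℝ) :
    boxInner L (blochBasis L α k) (WeylT η ξ (blochBasis L γ k)) =
      (((L ^ (-(m : ℝ) / 2) : ℝ) : ℂ)) ^ 2 *
        ee (∑ i, (ξ i * (η i / 2) + (γ i + k i) * η i)) *
        ∏ i, ∫ x in Set.Ico (-L / 2) (L / 2), ee ((ξ i + γ i - α i) * x) := by
  rw [boxInner]
  set Lc : ℂ := ((L ^ (-(m : ℝ) / 2) : ℝ) : ℂ) with hLc
  set C : ℂ := Lc ^ 2 * ee (∑ i, (ξ i * (η i / 2) + (γ i + k i) * η i)) with hC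
  have hfun : (fun x : Fin m → ℝ => (starRingEnd ℂ) (blochBasis L α k x) *
      WeylT η ξ (blochBasis L γ k) x) =
      fun x => C * ∏ i, ee ((ξ i + γ i - α i) * (x i)) := by
    funext x
    rw [bloch_eq, weyl_eq, bloch_eq]
    rw [map_mul, ee_conj, Complex.conj_ofReal]
    have hsum : (-(∑ i, (α i + k i) * x i) + (∑ i, ξ i * (η i / 2 + x i)) +
        ∑ i, (γ i + k i) * ((x + η) i)) =
        (∑ i, (ξ i * (η i / 2) + (γ i + k i) * η i)) + ∑ i, (ξ i + γ i - α i) * x i := by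
      rw [← Finset.sum_neg_distrib, ← Finset.sum_add_distrib, ← Finset.sum_add_distrib,
        ← Finset.sum_add_distrib]
      refine Finset.sum_congr rfl fun i _ => ?_
      simp only [Pi.add_apply]
      ring
    calc Lc * ee (-∑ i, (α i + k i) * x i) *
          (ee (∑ i, ξ i * (η i / 2 + x i)) * (Lc * ee (∑ i, (γ i + k i) * ((x + η) i))))
        = Lc ^ 2 * (ee (-∑ i, (α i + k i) * x i) * ee (∑ i, ξ i * (η i / 2 + x i)) *
            ee (∑ i, (γ i + k i) * ((x + η) i))) := by ring
      _ = Lc ^ 2 * ee ((-(∑ i, (α i + k i) * x i) + (∑ i, ξ i * (η i / 2 + x i)) +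
            ∑ i, (γ i + k i) * ((x + η) i))) := by rw [ee_add, ee_add]
      _ = Lc ^ 2 * ee ((∑ i, (ξ i * (η i / 2) + (γ i + k i) * η i)) +
            ∑ i, (ξ i + γ i - α i) * x i) := by rw [hsum]
      _ = C * ∏ i, ee ((ξ i + γ i - α i) * (x i)) := by
          rw [ee_add, hC, ← ee_sum]; ring
  rw [hfun]
  rw [integral_const_mul, hC, mul_assoc, mul_assoc]
  congr 2
  -- reduce the multi-dimensional integral to a product by indicators
  have hmeas : MeasurableSet (Set.univ.pi fun _ : Fin m => Set.Ico (-L / 2) (L / 2)) :=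
    MeasurableSet.univ_pi fun _ => measurableSet_Ico
  rw [← integral_indicator hmeas]
  have hind : (Set.indicator (Set.univ.pi fun _ : Fin m => Set.Ico (-L / 2) (L / 2))
      (fun x => ∏ i, ee ((ξ i + γ i - α i) * (x i)))) =
      fun x => ∏ i, Set.indicator (Set.Ico (-L / 2) (L / 2))
        (fun y => ee ((ξ i + γ i - α i) * y)) (x i) := by
    funext x
    by_cases hx : x ∈ Set.univ.pi fun _ : Fin m => Set.Ico (-L / 2) (L / 2)
    · rw [Set.indicator_of_mem hx]
      refine Finset.prod_congr rfl fun i _ => ?_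
      rw [Set.indicator_of_mem (hx i (Set.mem_univ i))]
    · rw [Set.indicator_of_notMem hx]
      obtain ⟨i, hi⟩ : ∃ i, x i ∉ Set.Ico (-L / 2) (L / 2) := by
        simpa [Set.mem_pi] using hx
      exact (Finset.prod_eq_zero (Finset.mem_univ i)
        (by rw [Set.indicator_of_notMem hi])).symm
  rw [hind]
  rw [MeasureTheory.integral_fintype_prod_volume_eq_prod
    (fun i y => Set.indicator (Set.Ico (-L / 2) (L / 2))
      (fun y => ee ((ξ i + γ i - α i) * y)) y)]
  refine Finset.prod_congr rfl fun i _ => ?_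
  rw [integral_indicator measurableSet_Ico]

/-- matrix-element form of the exact Egorov theorem. With
`E_α^{(k)} = |α+k|²/2` the eigenvalues of `H_m = -(1/(8π²))Δ` on `e_α^{(k)}`,
`e^{2πitE_α^{(k)}} e^{-2πitE_γ^{(k)}} ⟨e_α^{(k)}, T(η,ξ) e_γ^{(k)}⟩
  = ⟨e_α^{(k)}, T(η+ξt, ξ) e_γ^{(k)}⟩`. -/
theorem egorov_matrix_elements (L : ℝ) (hL : 0 < L) (m : ℕ)
    (k : Fin m → ℝ) (hk : ∀ i, k i ∈ Set.Ico (0 : ℝ) (1 / L))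
    (jα jγ jξ : Fin m → ℤ) (η : Fin m → ℝ) (t : ℝ)
    (α : Fin m → ℝ) (hα : α = fun i => (jα i : ℝ) / L)
    (γ : Fin m → ℝ) (hγ : γ = fun i => (jγ i : ℝ) / L)
    (ξ : Fin m → ℝ) (hξ : ξ = fun i => (jξ i : ℝ) / L)
    (Eα Eγ : ℝ) (hEα : Eα = (∑ i, (α i + k i) ^ 2) / 2)
    (hEγ : Eγ = (∑ i, (γ i + k i) ^ 2) / 2) :
    Complex.exp (2 * Real.pi * Complex.I * t * Eα) *
        Complex.exp (-(2 * Real.pi * Complex.I * t * Eγ)) *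
        boxInner L (blochBasis L α k) (WeylT η ξ (blochBasis L γ k)) =
      boxInner L (blochBasis L α k)
        (WeylT (fun i => η i + ξ i * t) ξ (blochBasis L γ k)) := by
  have hL' : (L : ℝ) ≠ 0 := ne_of_gt hL
  have hphase1 : Complex.exp (2 * Real.pi * Complex.I * t * Eα) = ee (t * Eα) := by
    rw [ee]; congr 1; push_cast; ring
  have hphase2 : Complex.exp (-(2 * Real.pi * Complex.I * t * Eγ)) = ee (-(t * Eγ)) := by
    rw [ee]; congr 1; push_cast; ring
  rw [hphase1, hphase2, box_eval, box_eval]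
  by_cases hall : ∀ i, jα i = jγ i + jξ i
  · -- the phases match since α = γ + ξ
    have hαγξ : ∀ i, α i = γ i + ξ i := by
      intro i
      rw [hα, hγ, hξ]
      simp only
      rw [hall i]
      push_cast
      ring
    have hphase : ee (t * Eα) * ee (-(t * Eγ)) *
        ee (∑ i, (ξ i * (η i / 2) + (γ i + k i) * η i)) =
        ee (∑ i, (ξ i * ((η i + ξ i * t) / 2) + (γ i + k i) * (η i + ξ i * t))) := by
      rw [← ee_add, ← ee_add]
      congr 1
      rw [hEα, hEγ]
      have e1 : t * ((∑ i, (α i + k i) ^ 2) / 2) = ∑ i, t * (α i + k i) ^ 2 / 2 := by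
        rw [Finset.sum_div, Finset.mul_sum]
        exact Finset.sum_congr rfl fun i _ => by ring
      have e2 : -(t * ((∑ i, (γ i + k i) ^ 2) / 2)) = ∑ i, -(t * (γ i + k i) ^ 2 / 2) := by
        rw [Finset.sum_div, Finset.mul_sum, Finset.sum_neg_distrib]
        exact congrArg Neg.neg (Finset.sum_congr rfl fun i _ => by ring)
      rw [e1, e2, ← Finset.sum_add_distrib, ← Finset.sum_add_distrib]
      refine Finset.sum_congr rfl fun i _ => ?_
      rw [hαγξ i]
      ring
    rw [← hphase]
    ring
  · -- some frequency mismatch: the product of integrals vanishes on both sides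
    push_neg at hall
    obtain ⟨i0, hi0⟩ := hall
    have hc : ξ i0 + γ i0 - α i0 = ((jξ i0 + jγ i0 - jα i0 : ℤ) : ℝ) / L := by
      rw [hα, hγ, hξ]
      push_cast
      field_simp
    have hn : (jξ i0 + jγ i0 - jα i0 : ℤ) ≠ 0 := by omega
    have hzero : (∫ x in Set.Ico (-L / 2) (L / 2), ee ((ξ i0 + γ i0 - α i0) * x)) = 0 := by
      have := oneDim L hL (jξ i0 + jγ i0 - jα i0)
      rw [if_neg hn] at this
      rw [← this]
      congr 1
      funext x
      rw [hc]
    have hprod : (∏ i, ∫ x in Set.Ico (-L / 2) (L / 2), ee ((ξ i + γ i - α i) * x)) = 0 :=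
      Finset.prod_eq_zero (Finset.mem_univ i0) hzero
    rw [hprod]
    simp
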